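/- Let ω < 0, 0 < α ≤ 1 and 0 < αγ ≤ β ≤ 1, and let λ ∈ ℂ. If s ∈ ℂ satisfies Re(s) ≥ 0 and F(s) = λ, then |s| ≤ |λ|^(1/β). -/

import Mathlib

open Real Complex Filter Set Topology

/-- The curve parametrization Λ(θ) bounding the stability region. -/
noncomputable def Lam (α β γ ω : ℝ) (θ : ℝ) : ℂ :=
  ((|ω| ^ (β / α) * Real.sin θ ^ (β / α - γ) * Real.sin (α * π / 2) ^ γ *
      Real.sin (α * π / 2 - θ) ^ (-(β / α)) : ℝ) : ℂ) *
    Complex.exp (Complex.I * ((γ * θ + (β - α * γ) * π / 2 : ℝ) : ℂ))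

/-- The characteristic function F(s) = s^(β-αγ) (s^α - ω)^γ (principal branches). -/
noncomputable def Fc (α β γ ω : ℝ) (s : ℂ) : ℂ :=
  s ^ ((β - α * γ : ℝ) : ℂ) * (s ^ ((α : ℝ) : ℂ) - (ω : ℂ)) ^ ((γ : ℝ) : ℂ)

/-- μ(θ) = (|ω| sin θ / sin(απ/2 - θ))^(1/α). -/
noncomputable def muP (α ω : ℝ) (θ : ℝ) : ℝ :=
  (|ω| * Real.sin θ / Real.sin (α * π / 2 - θ)) ^ (1 / α)

/-- ρ(θ) = |ω| sin(απ/2) / sin(απ/2 - θ). -/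
noncomputable def rhoP (α ω : ℝ) (θ : ℝ) : ℝ :=
  |ω| * Real.sin (α * π / 2) / Real.sin (α * π / 2 - θ)

theorem unstable_roots_bounded (α β γ ω : ℝ) (hω : ω < 0) (hα0 : 0 < α) (hα1 : α ≤ 1)
    (hαγ : 0 < α * γ) (hβ0 : α * γ ≤ β) (hβ1 : β ≤ 1) (lam : ℂ) :
    ∀ s : ℂ, 0 ≤ s.re → Fc α β γ ω s = lam →
      ‖s‖ ≤ ‖lam‖ ^ (1 / β) := by
  intro s hre hF
  have hβpos : 0 < β := lt_of_lt_of_le hαγ hβ0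
  have habslam : 0 ≤ ‖lam‖ := norm_nonneg lam
  rcases eq_or_ne s 0 with rfl | hs
  · simpa using Real.rpow_nonneg habslam (1 / β)
  have hγ : 0 < γ := by
    by_contra h
    push_neg at h
    nlinarith
  have hr : 0 < ‖s‖ := by
    simpa [norm_pos_iff] using hs
  set z := s ^ ((α : ℝ) : ℂ) with hz
  -- real part of z is nonnegative
  have hzre : 0 ≤ z.re := by
    rw [hz, Complex.cpow_def_of_ne_zero hs, Complex.exp_re]
    refine mul_nonneg (Real.exp_pos _).le ?_
    have harg := Complex.abs_arg_le_pi_div_two_iff.2 hre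
    have harg' := abs_le.1 harg
    have him : (Complex.log s * ((α : ℝ) : ℂ)).im = α * Complex.arg s := by
      simp [Complex.mul_im, Complex.log_im, mul_comm]
    rw [him]
    have hpi : (0:ℝ) < π := Real.pi_pos
    apply Real.cos_nonneg_of_mem_Icc
    constructor <;> nlinarith [harg'.1, harg'.2, abs_nonneg (Complex.arg s)]
  -- z ≠ 0 and z - ω ≠ 0
  have hzr : ‖z‖ = ‖s‖ ^ α := by
    rw [hz, Complex.norm_cpow_of_ne_zero hs]
    simp
  have hz0 : ‖z‖ ≠ 0 := by
    rw [hzr]; positivity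
  have hzsub : (‖z‖) ≤ ‖z - (ω : ℂ)‖ := by
    have h1 : (‖z‖) ^ 2 ≤ (‖z - (ω : ℂ)‖) ^ 2 := by
      rw [Complex.sq_norm, Complex.sq_norm, Complex.normSq_apply, Complex.normSq_apply]
      simp only [Complex.sub_re, Complex.sub_im, Complex.ofReal_re, Complex.ofReal_im]
      nlinarith
    nlinarith [norm_nonneg z, norm_nonneg (z - (ω : ℂ))]
  have hzsub0 : z - (ω : ℂ) ≠ 0 := by
    intro h
    rw [h] at hzsub
    simp at hzsub
    exact hz0 (by rw [hzsub]; simp)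
  -- compute |lam|
  have hFabs : ‖lam‖ = ‖s‖ ^ (β - α * γ) * ‖z - (ω : ℂ)‖ ^ γ := by
    rw [← hF, Fc, norm_mul, Complex.norm_cpow_of_ne_zero hs, Complex.norm_cpow_of_ne_zero hzsub0]
    simp
  have hkey : ‖s‖ ^ β ≤ ‖lam‖ := by
    rw [hFabs]
    calc ‖s‖ ^ β
        = ‖s‖ ^ (β - α * γ) * (‖s‖ ^ α) ^ γ := by
          rw [← Real.rpow_mul hr.le, ← Real.rpow_add hr]
          ring_nf
      _ ≤ ‖s‖ ^ (β - α * γ) * ‖z - (ω : ℂ)‖ ^ γ := by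
          apply mul_le_mul_of_nonneg_left _ (Real.rpow_nonneg hr.le _)
          rw [← hzr]
          exact Real.rpow_le_rpow (norm_nonneg z) hzsub hγ.le
  calc ‖s‖ = (‖s‖ ^ β) ^ (1 / β) := by
        rw [← Real.rpow_mul hr.le, mul_one_div, div_self hβpos.ne', Real.rpow_one]
    _ ≤ ‖lam‖ ^ (1 / β) :=
        Real.rpow_le_rpow (Real.rpow_nonneg hr.le _) hkey (by positivity)
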